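/- (Measurement of an AKLT qutrit after the permutation V implements an X-rotation in the correlation space.) For every φ ∈ ℝ, the following identities of 2×2 complex matrices hold: ((1 + e^{−iφ})/2) • (X·Z) + ((1 − e^{−iφ})/2) • Z = e^{−iφ/2} • ((X·Z) · exp((−iφ/2) • X)), and ((1 − e^{−iφ})/2) • (X·Z) + ((1 + e^{−iφ})/2) • Z = e^{−iφ/2} • (Z · exp((−iφ/2) • X)). That is, after relabeling the AKLT tensors by the permutation V (so that the outcomes α(φ), β(φ) contract against A[2]=X·Z and A[3]=Z), the measurement implements XZ e^{−iφX/2} and Z e^{−iφX/2}, respectively, up to the global phase e^{−iφ/2}. -/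

import Mathlib

open Matrix

noncomputable section

/-- Pauli matrix `X` -/
def X : Matrix (Fin 2) (Fin 2) ℂ := !![0, 1; 1, 0]

/-- Pauli matrix `Z` -/
def Z : Matrix (Fin 2) (Fin 2) ℂ := !![1, 0; 0, -1]

lemma exp_smul_X (c : ℂ) :
    NormedSpace.exp (c • X) =
      !![(Complex.exp c + Complex.exp (-c)) / 2, (Complex.exp c - Complex.exp (-c)) / 2;
         (Complex.exp c - Complex.exp (-c)) / 2, (Complex.exp c + Complex.exp (-c)) / 2] := by
  have hU : IsUnit (!![1, 1; 1, -1] : Matrix (Fin 2) (Fin 2) ℂ) := by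
    apply (Matrix.isUnit_iff_isUnit_det _).mpr
    simp [Matrix.det_fin_two_of]
    norm_num
  have hUinv : (!![1, 1; 1, -1] : Matrix (Fin 2) (Fin 2) ℂ)⁻¹ = !![1/2, 1/2; 1/2, -(1/2)] := by
    apply Matrix.inv_eq_right_inv
    ext i j
    fin_cases i <;> fin_cases j <;>
      simp [Matrix.mul_apply, Fin.sum_univ_two, Matrix.one_apply] <;> norm_num
  have hconj : c • X = !![1, 1; 1, -1] * Matrix.diagonal ![c, -c] * (!![1, 1; 1, -1])⁻¹ := by
    rw [hUinv]
    ext i j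
    fin_cases i <;> fin_cases j <;>
      simp [X, Matrix.mul_apply, Fin.sum_univ_two, Matrix.diagonal_apply, Matrix.vecHead, Matrix.vecTail, Matrix.vecMul_diagonal, Matrix.mulVec_diagonal] <;> ring
  rw [hconj, Matrix.exp_conj _ _ hU, Matrix.exp_diagonal, hUinv]
  ext i j
  fin_cases i <;> fin_cases j <;>
    simp [Matrix.mul_apply, Fin.sum_univ_two, Matrix.diagonal_apply, Matrix.vecHead, Matrix.vecTail, Matrix.vecMul_diagonal, Matrix.mulVec_diagonal, Pi.exp_def, ← Complex.exp_eq_exp_ℂ] <;> ring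

/-- **measurement of an AKLT qutrit after the permutation `V` implements an
X-rotation in the correlation space.** After relabeling by `V`, the outcomes `α(φ)`, `β(φ)`
contract against `A[2]=X·Z` and `A[3]=Z` and implement `XZ e^{−iφX/2}` and `Z e^{−iφX/2}`
respectively, up to the global phase `e^{−iφ/2}`. -/
theorem statement14 (φ : ℝ) :
    ((1 + Complex.exp (-(Complex.I * φ))) / 2) • (X * Z)
        + ((1 - Complex.exp (-(Complex.I * φ))) / 2) • Z
      = Complex.exp (-(Complex.I * φ) / 2) •
          ((X * Z) * NormedSpace.exp ((-(Complex.I * φ) / 2) • X)) ∧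
    ((1 - Complex.exp (-(Complex.I * φ))) / 2) • (X * Z)
        + ((1 + Complex.exp (-(Complex.I * φ))) / 2) • Z
      = Complex.exp (-(Complex.I * φ) / 2) •
          (Z * NormedSpace.exp ((-(Complex.I * φ) / 2) • X)) := by

  have h1 : Complex.exp (-(Complex.I * (φ:ℂ))/2) * Complex.exp (-(-(Complex.I * (φ:ℂ))/2)) = 1 := by
    rw [← Complex.exp_add]; ring_nf; exact Complex.exp_zero
  have h2 : Complex.exp (-(Complex.I * (φ:ℂ))/2) * Complex.exp (-(Complex.I * (φ:ℂ))/2) = Complex.exp (-(Complex.I * (φ:ℂ))) := by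
    rw [← Complex.exp_add]; ring_nf
  rw [exp_smul_X]
  constructor <;>
  · ext i j
    fin_cases i <;> fin_cases j <;>
      · simp [X, Z, Matrix.mul_apply, Fin.sum_univ_two]
        first
          | ring1
          | linear_combination h2 - h1
          | linear_combination h1 + h2
          | linear_combination h1 - h2
          | linear_combination -h1 - h2
          | linear_combination (h2 - h1)/2
          | linear_combination (h1 + h2)/2
          | linear_combination (h1 - h2)/2
          | linear_combination (-h1 - h2)/2

end
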